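/- Let G be a Hausdorff topological group whose underlying space is Lindelöf and not a P-space. Then G contains a normal subgroup N that is closed in G, nowhere dense in G, and a Gδ set in G. -/

import Mathlib

open Set Topology Pointwise

universe u v w

/-- A cozero set: the set where some continuous real-valued function is nonzero. -/
def IsCozeroSet {X : Type u} [TopologicalSpace X] (s : Set X) : Prop :=
  ∃ f : X → ℝ, Continuous f ∧ s = {x | f x ≠ 0}

/-- An F-space: any two disjoint cozero sets are completely separated. -/
def IsFSpace (X : Type u) [TopologicalSpace X] : Prop :=
  ∀ s t : Set X, IsCozeroSet s → IsCozeroSet t → Disjoint s t →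
    ∃ g : X → ℝ, Continuous g ∧ (∀ x, g x ∈ Set.Icc (0 : ℝ) 1) ∧
      (∀ x ∈ s, g x = 0) ∧ (∀ x ∈ t, g x = 1)

/-- An F'-space: any two disjoint cozero sets have disjoint closures. -/
def IsFPrimeSpace (X : Type u) [TopologicalSpace X] : Prop :=
  ∀ s t : Set X, IsCozeroSet s → IsCozeroSet t → Disjoint s t →
    Disjoint (closure s) (closure t)

/-- A basically disconnected space: the closure of every cozero set is open. -/
def IsBasicallyDisconnected (X : Type u) [TopologicalSpace X] : Prop :=
  ∀ s : Set X, IsCozeroSet s → IsOpen (closure s)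

/-- A P-space: every Gδ set is open. -/
def IsPSpace (X : Type u) [TopologicalSpace X] : Prop :=
  ∀ s : Set X, IsGδ s → IsOpen s

/-- Covering dimension at most `n`: every finite open cover has a finite open
refinement in which every point belongs to at most `n + 1` members. -/
def CovDimLE (X : Type u) [TopologicalSpace X] (n : ℕ) : Prop :=
  ∀ 𝒰 : Finset (Set X), (∀ U ∈ 𝒰, IsOpen U) → ⋃₀ (𝒰 : Set (Set X)) = Set.univ →
    ∃ 𝒱 : Finset (Set X), (∀ V ∈ 𝒱, IsOpen V) ∧ ⋃₀ (𝒱 : Set (Set X)) = Set.univ ∧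
      (∀ V ∈ 𝒱, ∃ U ∈ 𝒰, V ⊆ U) ∧
      ∀ x : X, {V : Set X | V ∈ 𝒱 ∧ x ∈ V}.ncard ≤ n + 1

/-- An ℝ-quotient map: a continuous surjection such that a real-valued function on the
target is continuous whenever its composition with the map is continuous. -/
def IsRQuotientMap {X : Type u} {Y : Type v} [TopologicalSpace X] [TopologicalSpace Y]
    (p : X → Y) : Prop :=
  Continuous p ∧ Function.Surjective p ∧ ∀ φ : Y → ℝ, Continuous (φ ∘ p) → Continuous φ

/-- A non-P-point: a point having a Gδ set around it which is not a neighborhood of it. -/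
def IsNonPPoint {X : Type u} [TopologicalSpace X] (x : X) : Prop :=
  ∃ s : Set X, IsGδ s ∧ x ∈ s ∧ s ∉ nhds x

section Aux

variable {G : Type*} [Group G]

lemma aux_countable_closure {s : Set G} (hs : s.Countable) :
    ((Subgroup.closure s : Subgroup G) : Set G).Countable := by
  have hsi : (s⁻¹ : Set G).Countable := by
    rw [← Set.image_inv_eq_inv]
    exact hs.image _
  have ht : (s ∪ s⁻¹).Countable := hs.union hsi
  have hsub : ((Subgroup.closure s : Subgroup G) : Set G) ⊆
      List.prod '' {l : List G | ∀ y ∈ l, y ∈ s ∪ s⁻¹} := by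
    intro x hx
    rw [SetLike.mem_coe, ← Subgroup.mem_toSubmonoid, Subgroup.closure_toSubmonoid] at hx
    obtain ⟨l, hl, rfl⟩ := Submonoid.exists_list_of_mem_closure hx
    exact ⟨l, hl, rfl⟩
  refine Set.Countable.mono hsub ?_
  refine Set.Countable.image ?_ _
  have hsub2 : {l : List G | ∀ y ∈ l, y ∈ s ∪ s⁻¹} ⊆
      Set.range (fun l : List (s ∪ s⁻¹ : Set G) => l.map Subtype.val) := by
    intro l hl
    refine ⟨l.attach.map (fun y => ⟨y.1, hl y.1 y.2⟩), ?_⟩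
    simp [List.map_map, Function.comp_def]
  haveI := ht.to_subtype
  exact Set.Countable.mono hsub2 (Set.countable_range _)

/-- The countable subgroup generated by the nets of the first `i+1` stages. -/
def BSetAux (net : Set G → Set G) (W : ℕ → Set G) (i : ℕ) : Set G :=
  (Subgroup.closure (⋃ k ∈ Set.Iic i, net (W k)) : Subgroup G)

/-- The conjugating element used at stage `n`. -/
def conjAux (enum : Set G → ℕ → G) (net : Set G → Set G) (W : ℕ → Set G) (n : ℕ) : G :=
  enum (BSetAux net W (Nat.unpair (Nat.unpair n).1).1) (Nat.unpair (Nat.unpair n).1).2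

/-- The open set that stage `n+1` must be squeezed (as a cube) into. -/
def targetAux (enum : Set G → ℕ → G) (net : Set G → Set G) (O : ℕ → Set G)
    (W : ℕ → Set G) (n : ℕ) : Set G :=
  W n ∩ O (n + 1) ∩
    (fun x => conjAux enum net W n * x * (conjAux enum net W n)⁻¹) ⁻¹' W (Nat.unpair n).2

/-- History of the recursive construction. -/
def histAux (shrinkF : Set G → Set G) (enum : Set G → ℕ → G) (net : Set G → Set G)
    (O : ℕ → Set G) : ℕ → ℕ → Set G
  | 0 => fun _ => shrinkF (O 0)
  | (n + 1) =>
      Function.update (histAux shrinkF enum net O n) (n + 1)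
        (shrinkF (targetAux enum net O (histAux shrinkF enum net O n) n))

/-- The actual sequence. -/
def VAux (shrinkF : Set G → Set G) (enum : Set G → ℕ → G) (net : Set G → Set G)
    (O : ℕ → Set G) (n : ℕ) : Set G :=
  histAux shrinkF enum net O n n

lemma BSetAux_congr (net : Set G → Set G) {W W' : ℕ → Set G} {i : ℕ}
    (h : ∀ m ≤ i, W m = W' m) : BSetAux net W i = BSetAux net W' i := by
  have he : (⋃ k ∈ Set.Iic i, net (W k)) = ⋃ k ∈ Set.Iic i, net (W' k) :=
    Set.iUnion₂_congr fun k hk => by rw [h k hk]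
  unfold BSetAux
  rw [he]

lemma targetAux_congr (enum : Set G → ℕ → G) (net : Set G → Set G) (O : ℕ → Set G)
    {W W' : ℕ → Set G} {n : ℕ} (h : ∀ m ≤ n, W m = W' m) :
    targetAux enum net O W n = targetAux enum net O W' n := by
  have hm : (Nat.unpair n).2 ≤ n := Nat.unpair_right_le n
  have hi : (Nat.unpair (Nat.unpair n).1).1 ≤ n :=
    le_trans (Nat.unpair_left_le _) (Nat.unpair_left_le n)
  have hB : BSetAux net W (Nat.unpair (Nat.unpair n).1).1
      = BSetAux net W' (Nat.unpair (Nat.unpair n).1).1 :=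
    BSetAux_congr net fun m hm' => h m (le_trans hm' hi)
  unfold targetAux conjAux
  rw [h n le_rfl, hB, h _ hm]

lemma histAux_agree (shrinkF : Set G → Set G) (enum : Set G → ℕ → G) (net : Set G → Set G)
    (O : ℕ → Set G) : ∀ n m, m ≤ n →
      histAux shrinkF enum net O n m = VAux shrinkF enum net O m := by
  intro n
  induction n with
  | zero => intro m hm; rw [Nat.le_zero.mp hm]; rfl
  | succ n ih =>
      intro m hm
      rcases Nat.lt_or_ge m (n+1) with h | h
      · have hne : m ≠ n + 1 := Nat.ne_of_lt h
        have : histAux shrinkF enum net O (n+1) m = histAux shrinkF enum net O n m := by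
          simp [histAux, Function.update_of_ne hne]
        rw [this, ih m (Nat.lt_succ_iff.mp h)]
      · have : m = n + 1 := le_antisymm hm h
        subst this
        rfl

lemma VAux_succ (shrinkF : Set G → Set G) (enum : Set G → ℕ → G) (net : Set G → Set G)
    (O : ℕ → Set G) (n : ℕ) :
    VAux shrinkF enum net O (n+1)
      = shrinkF (targetAux enum net O (VAux shrinkF enum net O) n) := by
  have : VAux shrinkF enum net O (n+1)
      = shrinkF (targetAux enum net O (histAux shrinkF enum net O n) n) := by
    simp [VAux, histAux]
  rw [this, targetAux_congr enum net O (fun m hm => histAux_agree shrinkF enum net O n m hm)]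

end Aux

/-- Any Lindelöf Hausdorff topological group which is not a P-space contains a closed,
nowhere dense, Gδ normal subgroup. -/
theorem statement6 {G : Type u} [Group G] [TopologicalSpace G] [IsTopologicalGroup G]
    [T2Space G] [LindelofSpace G] (hG : ¬ IsPSpace G) :
    ∃ N : Subgroup G, N.Normal ∧ IsClosed (N : Set G) ∧
      IsNowhereDense (N : Set G) ∧ IsGδ (N : Set G) := by
  classical
  rw [IsPSpace] at hG
  push_neg at hG
  obtain ⟨s, hsGδ, hsno⟩ := hG
  have hx : ∃ x ∈ s, s ∉ 𝓝 x := by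
    by_contra h
    push_neg at h
    exact hsno (isOpen_iff_mem_nhds.mpr h)
  obtain ⟨x, hxs, hxn⟩ := hx
  obtain ⟨T, hTo, hTc, hTeq⟩ := hsGδ
  have hTne : T.Nonempty := by
    rcases Set.eq_empty_or_nonempty T with h | h
    · exfalso; apply hsno; rw [hTeq, h]; simp only [Set.sInter_empty]; exact isOpen_univ
    · exact h
  obtain ⟨f, hf⟩ := hTc.exists_eq_range hTne
  set O : ℕ → Set G := fun n => (fun g => x * g) ⁻¹' f n with hOdef
  have hfT : ∀ n, f n ∈ T := fun n => by rw [hf]; exact ⟨n, rfl⟩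
  have hOopen : ∀ n, IsOpen (O n) := fun n =>
    (hTo _ (hfT n)).preimage (continuous_mul_left x)
  have hO1 : ∀ n, (1:G) ∈ O n := fun n => by
    have hxf : x ∈ f n := by
      rw [hTeq] at hxs; exact hxs _ (hfT n)
    simp only [hOdef, Set.mem_preimage, mul_one]
    exact hxf
  have hSnn : (⋂ n, O n) ∉ 𝓝 (1:G) := by
    intro hmem
    apply hxn
    rw [← map_mul_left_nhds_one x, Filter.mem_map]
    refine Filter.mem_of_superset hmem ?_
    intro g hg
    simp only [Set.mem_iInter, hOdef, Set.mem_preimage] at hg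
    show x * g ∈ s
    rw [hTeq]
    intro t ht
    rw [hf] at ht
    obtain ⟨n, rfl⟩ := ht
    exact hg n
  -- choice functions
  have shrinkEx : ∀ U : Set G, ∃ W : Set G, IsOpen W ∧ (1:G) ∈ W ∧ W⁻¹ = W ∧
      (IsOpen U → (1:G) ∈ U → W * W * W ⊆ U) := by
    intro U
    by_cases hU : IsOpen U ∧ (1:G) ∈ U
    · obtain ⟨A, hAo, hA1, hA2⟩ := exists_open_nhds_one_mul_subset (hU.1.mem_nhds hU.2)
      obtain ⟨W0, hW0o, hW01, hW02⟩ := exists_open_nhds_one_mul_subset (hAo.mem_nhds hA1)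
      refine ⟨W0 ∩ W0⁻¹, hW0o.inter hW0o.inv, ⟨hW01, by simpa using hW01⟩, ?_, ?_⟩
      · simp [Set.inter_comm]
      · intro _ _
        set W := W0 ∩ W0⁻¹ with hWdef
        have hWsub : W ⊆ W0 := Set.inter_subset_left
        have h1W : (1:G) ∈ W := ⟨hW01, by simpa using hW01⟩
        have step1 : W * W * W ⊆ (W * W) * (W * W) := by
          have h := Set.subset_mul_left (W * W * W) h1W
          rwa [mul_assoc (W * W) W W] at h
        have hWWA : W * W ⊆ A := (Set.mul_subset_mul hWsub hWsub).trans hW02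
        exact step1.trans ((Set.mul_subset_mul hWWA hWWA).trans hA2)
    · exact ⟨Set.univ, isOpen_univ, trivial, by simp, fun h1 h2 => absurd ⟨h1, h2⟩ hU⟩
  have netEx : ∀ U : Set G, ∃ C : Set G, C.Countable ∧
      (IsOpen U → (1:G) ∈ U → ∀ g : G, ∃ c ∈ C, g ∈ c • U) := by
    intro U
    by_cases hU : IsOpen U ∧ (1:G) ∈ U
    · obtain ⟨t, htc, htcov⟩ := isLindelof_univ.elim_countable_subcover
        (fun g : G => g • U) (fun g => hU.1.smul g)
        (fun g _ => Set.mem_iUnion.mpr ⟨g, ⟨1, hU.2, mul_one g⟩⟩)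
      refine ⟨t, htc, fun _ _ g => ?_⟩
      have h := htcov (Set.mem_univ g)
      simpa only [Set.mem_iUnion, exists_prop] using h
    · exact ⟨∅, Set.countable_empty, fun h1 h2 => absurd ⟨h1, h2⟩ hU⟩
  have enumEx : ∀ s : Set G, ∃ e : ℕ → G,
      (s.Countable → (1:G) ∈ s → Set.range e = s) := by
    intro s
    by_cases hs : s.Countable ∧ (1:G) ∈ s
    · obtain ⟨e, he⟩ := hs.1.exists_eq_range ⟨1, hs.2⟩
      exact ⟨e, fun _ _ => he.symm⟩
    · exact ⟨fun _ => 1, fun h1 h2 => absurd ⟨h1, h2⟩ hs⟩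
  choose shrinkF hSo hS1 hSsym hScube using shrinkEx
  choose net hnetC hnetCov using netEx
  choose enum henum using enumEx
  set V : ℕ → Set G := VAux shrinkF enum net O with hVdefn
  have hV0 : V 0 = shrinkF (O 0) := rfl
  have hVS : ∀ n, V (n+1) = shrinkF (targetAux enum net O V n) := fun n =>
    VAux_succ shrinkF enum net O n
  have hVopen : ∀ n, IsOpen (V n) := by
    intro n
    cases n with
    | zero => rw [hV0]; exact hSo _
    | succ n => rw [hVS n]; exact hSo _
  have hV1 : ∀ n, (1:G) ∈ V n := by
    intro n
    cases n with
    | zero => rw [hV0]; exact hS1 _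
    | succ n => rw [hVS n]; exact hS1 _
  have hVsymm : ∀ n, (V n)⁻¹ = V n := by
    intro n
    cases n with
    | zero => rw [hV0]; exact hSsym _
    | succ n => rw [hVS n]; exact hSsym _
  have hconjCont : ∀ c : G, Continuous (fun y : G => c * y * c⁻¹) :=
    fun c => (continuous_mul_left c).mul continuous_const
  have hTprop : ∀ n, IsOpen (targetAux enum net O V n) ∧ (1:G) ∈ targetAux enum net O V n := by
    intro n
    unfold targetAux
    constructor
    · exact ((hVopen n).inter (hOopen (n+1))).inter ((hVopen _).preimage (hconjCont _))
    · refine ⟨⟨hV1 n, hO1 (n+1)⟩, ?_⟩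
      simp only [Set.mem_preimage, mul_one, mul_inv_cancel]
      exact hV1 _
  have htsub : ∀ n, targetAux enum net O V n ⊆ V n := by
    intro n y hy
    exact hy.1.1
  have hcube : ∀ n, V (n+1) * V (n+1) * V (n+1) ⊆ targetAux enum net O V n := by
    intro n
    rw [hVS n]
    exact hScube _ (hTprop n).1 (hTprop n).2
  have hVsubcube : ∀ W : Set G, (1:G) ∈ W → W ⊆ W * W * W := by
    intro W h1 y hy
    have h : (1 * 1) * y ∈ W * W * W := Set.mul_mem_mul (Set.mul_mem_mul h1 h1) hy
    simpa using h
  have hself : ∀ n, V (n+1) ⊆ targetAux enum net O V n :=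
    fun n => (hVsubcube _ (hV1 (n+1))).trans (hcube n)
  have hVsubO : ∀ n, V n ⊆ O n := by
    intro n
    cases n with
    | zero =>
        rw [hV0]
        exact (hVsubcube _ (hS1 (O 0))).trans (hScube (O 0) (hOopen 0) (hO1 0))
    | succ n => exact fun y hy => ((hself n) hy).1.2
  have hdove : ∀ i j m : ℕ, ∀ y ∈ V (Nat.pair (Nat.pair i j) m + 1),
      enum (BSetAux net V i) j * y * (enum (BSetAux net V i) j)⁻¹ ∈ V m := by
    intro i j m y hy
    have h := (hself _) hy
    unfold targetAux conjAux at h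
    rw [Nat.unpair_pair, Nat.unpair_pair] at h
    exact h.2
  set N : Set G := ⋂ n, V n with hNdef
  have hNsub : ∀ n, N ⊆ V n := fun n => Set.iInter_subset _ n
  have hNmem : ∀ {y : G}, y ∈ N → ∀ n, y ∈ V n := fun hy n => Set.mem_iInter.mp hy n
  have hN1 : (1:G) ∈ N := Set.mem_iInter.mpr hV1
  have hNinv : ∀ {y : G}, y ∈ N → y⁻¹ ∈ N := by
    intro y hy
    refine Set.mem_iInter.mpr fun n => ?_
    rw [← hVsymm n]
    simpa using hNmem hy n
  have hNmul : ∀ {a b : G}, a ∈ N → b ∈ N → a * b ∈ N := by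
    intro a b ha hb
    refine Set.mem_iInter.mpr fun n => ?_
    have h : a * b * 1 ∈ V (n+1) * V (n+1) * V (n+1) :=
      Set.mul_mem_mul (Set.mul_mem_mul (hNmem ha (n+1)) (hNmem hb (n+1))) (hV1 (n+1))
    have h2 := htsub n ((hcube n) h)
    simpa using h2
  have hBcountable : ∀ i, (BSetAux net V i : Set G).Countable := by
    intro i
    show ((Subgroup.closure _ : Subgroup G) : Set G).Countable
    exact aux_countable_closure (Set.Countable.biUnion (Set.to_countable _) fun k _ => hnetC _)
  have hB1 : ∀ i, (1:G) ∈ BSetAux net V i := fun i => (Subgroup.closure _).one_mem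
  have hBrange : ∀ i, Set.range (enum (BSetAux net V i)) = BSetAux net V i :=
    fun i => henum _ (hBcountable i) (hB1 i)
  have hBconj : ∀ i, ∀ c ∈ BSetAux net V i, ∀ y ∈ N, c * y * c⁻¹ ∈ N := by
    intro i c hc y hy
    have hcr : c ∈ Set.range (enum (BSetAux net V i)) := by rw [hBrange i]; exact hc
    obtain ⟨j, rfl⟩ := hcr
    exact Set.mem_iInter.mpr fun m => hdove i j m y (hNmem hy _)
  have hBinv : ∀ i, ∀ c ∈ BSetAux net V i, c⁻¹ ∈ BSetAux net V i := by
    intro i c hc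
    exact (Subgroup.closure _).inv_mem hc
  have hnetB : ∀ n, net (V n) ⊆ BSetAux net V n := by
    intro n c hc
    exact Subgroup.subset_closure (Set.mem_biUnion (Set.mem_Iic.mpr le_rfl) hc)
  have hnormal : ∀ y ∈ N, ∀ g : G, g * y * g⁻¹ ∈ N := by
    intro y hy g
    refine Set.mem_iInter.mpr fun n => ?_
    obtain ⟨c, hc, hg⟩ := hnetCov (V (n+1)) (hVopen (n+1)) (hV1 (n+1)) g⁻¹
    obtain ⟨v, hv, hgv⟩ := hg
    have hyc : c⁻¹ * y * c ∈ N := by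
      have h := hBconj (n+1) c⁻¹ (hBinv (n+1) c (hnetB (n+1) hc)) y hy
      simpa using h
    have hvmem : v⁻¹ ∈ V (n+1) := by
      rw [← hVsymm (n+1)]
      simpa using hv
    have h3 : v⁻¹ * (c⁻¹ * y * c) * v ∈ V (n+1) * V (n+1) * V (n+1) :=
      Set.mul_mem_mul (Set.mul_mem_mul hvmem (hNmem hyc (n+1))) hv
    have hVn : v⁻¹ * (c⁻¹ * y * c) * v ∈ V n := htsub n ((hcube n) h3)
    have hgeq : g = v⁻¹ * c⁻¹ := by
      have hcv : c * v = g⁻¹ := hgv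
      calc g = (g⁻¹)⁻¹ := (inv_inv g).symm
        _ = (c * v)⁻¹ := by rw [hcv]
        _ = v⁻¹ * c⁻¹ := mul_inv_rev c v
    have hEq : g * y * g⁻¹ = v⁻¹ * (c⁻¹ * y * c) * v := by
      rw [hgeq]
      group
    rw [hEq]
    exact hVn
  have hclosureV : ∀ n, closure (V (n+1)) ⊆ V n := by
    intro n z hz
    have hzo : z ∈ z • V (n+1) := ⟨1, hV1 _, mul_one z⟩
    obtain ⟨y, hy1, hy2⟩ := mem_closure_iff.mp hz (z • V (n+1)) ((hVopen (n+1)).smul z) hzo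
    obtain ⟨v, hv, hvz⟩ := hy1
    have hzeq : z = y * v⁻¹ := by
      have : z * v = y := hvz
      rw [← this]
      group
    have hv' : v⁻¹ ∈ V (n+1) := by
      rw [← hVsymm (n+1)]
      simpa using hv
    have h4 : (1 * y) * v⁻¹ ∈ V (n+1) * V (n+1) * V (n+1) :=
      Set.mul_mem_mul (Set.mul_mem_mul (hV1 _) hy2) hv'
    have h5 := htsub n ((hcube n) h4)
    rw [hzeq]
    simpa using h5
  have hNeq : N = ⋂ n, closure (V (n+1)) := by
    apply Set.Subset.antisymm
    · exact Set.subset_iInter fun n => (hNsub (n+1)).trans subset_closure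
    · intro z hz
      exact Set.mem_iInter.mpr fun n => hclosureV n (Set.mem_iInter.mp hz n)
  have hNclosed : IsClosed N := by
    rw [hNeq]
    exact isClosed_iInter fun n => isClosed_closure
  have hNGδ : IsGδ N := IsGδ.iInter_of_isOpen hVopen
  let Nsub : Subgroup G :=
    { carrier := N
      one_mem' := hN1
      mul_mem' := fun ha hb => hNmul ha hb
      inv_mem' := fun ha => hNinv ha }
  have hint : interior N = ∅ := by
    by_contra h
    obtain ⟨z, hz⟩ := Set.nonempty_iff_ne_empty.mpr h
    have hN𝓝 : N ∈ 𝓝 z := mem_interior_iff_mem_nhds.mp hz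
    have hopen : IsOpen (Nsub : Set G) := Subgroup.isOpen_of_mem_nhds Nsub hN𝓝
    have hmem1 : N ∈ 𝓝 (1:G) := hopen.mem_nhds hN1
    refine hSnn (Filter.mem_of_superset hmem1 ?_)
    intro z' hz'
    exact Set.mem_iInter.mpr fun n => hVsubO n (hNmem hz' n)
  refine ⟨Nsub, ⟨fun y hy g => hnormal y hy g⟩, hNclosed, ?_, hNGδ⟩
  show interior (closure N) = ∅
  rw [hNclosed.closure_eq]
  exact hint
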